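/- arXiv:1604.05009 — 3 statements merged into one kernel-verified Lean document; each statement's English description precedes it below -/
import Mathlib

section
/- For all a, b, c ∈ ℝ, |φ^β(a,b) − φ^β(a,c)| ≤ c_φ (1 + L |a − b|) |b − c|; in particular |φ^β(a,b) − φ^β(a,c)| ≤ C (1 + |a − b|) |b − c| with C = c_φ · max(1, L). -/
/-- With `0 ≤ g ≤ c_φ` measurable, `β` `C¹` with `|β'| ≤ 1` and `β'`
Lipschitz with constant `L`, and `φ^β(a,b) = ∫_b^a β'(σ-b) g σ dσ`, one has
`|φ^β(a,b) - φ^β(a,c)| ≤ c_φ (1 + L |a-b|) |b-c|`, and in particular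
`|φ^β(a,b) - φ^β(a,c)| ≤ C (1 + |a-b|) |b-c|` with `C = c_φ * max 1 L`. -/
theorem stmt3 (cφ : ℝ) (hcφ : 0 < cφ)
    (g : ℝ → ℝ) (hg_meas : Measurable g)
    (hg0 : ∀ σ : ℝ, 0 ≤ g σ) (hgle : ∀ σ : ℝ, g σ ≤ cφ)
    (β : ℝ → ℝ) (hβC1 : ContDiff ℝ 1 β) (hβ' : ∀ r : ℝ, |deriv β r| ≤ 1)
    (L : ℝ) (hL : 0 ≤ L)
    (hβ'Lip : ∀ x y : ℝ, |deriv β x - deriv β y| ≤ L * |x - y|) :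
    ∀ a b c : ℝ,
      |(∫ σ in b..a, deriv β (σ - b) * g σ) - ∫ σ in c..a, deriv β (σ - c) * g σ|
          ≤ cφ * (1 + L * |a - b|) * |b - c| ∧
      |(∫ σ in b..a, deriv β (σ - b) * g σ) - ∫ σ in c..a, deriv β (σ - c) * g σ|
          ≤ (cφ * max 1 L) * (1 + |a - b|) * |b - c| := by
  have hβ'cont : Continuous (deriv β) := hβC1.continuous_deriv le_rfl
  -- integrability of the shifted integrand on any interval
  have hint : ∀ t u v : ℝ,
      IntervalIntegrable (fun σ => deriv β (σ - t) * g σ) MeasureTheory.volume u v := by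
    intro t u v
    refine (intervalIntegrable_const :
        IntervalIntegrable (fun _ => cφ) MeasureTheory.volume u v).mono_fun' ?_ ?_
    · exact ((hβ'cont.measurable.comp (measurable_id.sub_const t)).mul hg_meas).aestronglyMeasurable
    · filter_upwards with σ
      have h1 : |deriv β (σ - t)| ≤ 1 := hβ' _
      have h2 : |g σ| ≤ cφ := by rw [abs_of_nonneg (hg0 σ)]; exact hgle σ
      calc ‖deriv β (σ - t) * g σ‖ = |deriv β (σ - t)| * |g σ| := abs_mul _ _
        _ ≤ 1 * cφ := mul_le_mul h1 h2 (abs_nonneg _) zero_le_one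
        _ = cφ := one_mul _
  intro a b c
  set f1 : ℝ → ℝ := fun σ => deriv β (σ - b) * g σ with hf1
  set f2 : ℝ → ℝ := fun σ => deriv β (σ - c) * g σ with hf2
  have key : (∫ σ in b..a, f1 σ) - ∫ σ in c..a, f2 σ
      = (∫ σ in b..a, f1 σ - f2 σ) + ∫ σ in b..c, f2 σ := by
    rw [intervalIntegral.integral_sub (hint b b a) (hint c b a)]
    have hsplit : (∫ σ in b..c, f2 σ) + ∫ σ in c..a, f2 σ = ∫ σ in b..a, f2 σ :=
      intervalIntegral.integral_add_adjacent_intervals (hint c b c) (hint c c a)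
    linarith [hsplit]
  have bound1 : |∫ σ in b..a, f1 σ - f2 σ| ≤ cφ * L * |b - c| * |a - b| := by
    have := intervalIntegral.norm_integral_le_of_norm_le_const
      (C := cφ * L * |b - c|) (f := fun σ => f1 σ - f2 σ) (a := b) (b := a) ?_
    · simpa [Real.norm_eq_abs, abs_sub_comm a b] using this
    · intro σ _
      have : f1 σ - f2 σ = (deriv β (σ - b) - deriv β (σ - c)) * g σ := by
        simp [hf1, hf2]; ring
      rw [Real.norm_eq_abs]
      show |f1 σ - f2 σ| ≤ _
      rw [this, abs_mul]
      have h1 : |deriv β (σ - b) - deriv β (σ - c)| ≤ L * |b - c| := by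
        have := hβ'Lip (σ - b) (σ - c)
        have heq : |(σ - b) - (σ - c)| = |b - c| := by rw [abs_sub_comm]; ring_nf
        rw [heq] at this; exact this
      have h2 : |g σ| ≤ cφ := by rw [abs_of_nonneg (hg0 σ)]; exact hgle σ
      calc |deriv β (σ - b) - deriv β (σ - c)| * |g σ| ≤ (L * |b - c|) * cφ :=
            mul_le_mul h1 h2 (abs_nonneg _) (by positivity)
        _ = cφ * L * |b - c| := by ring
  have bound2 : |∫ σ in b..c, f2 σ| ≤ cφ * |b - c| := by
    have := intervalIntegral.norm_integral_le_of_norm_le_const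
      (C := cφ) (f := f2) (a := b) (b := c) ?_
    · simpa [Real.norm_eq_abs, abs_sub_comm c b] using this
    · intro σ _
      rw [Real.norm_eq_abs, hf2, abs_mul]
      have h2 : |g σ| ≤ cφ := by rw [abs_of_nonneg (hg0 σ)]; exact hgle σ
      calc |deriv β (σ - c)| * |g σ| ≤ 1 * cφ :=
            mul_le_mul (hβ' _) h2 (abs_nonneg _) zero_le_one
        _ = cφ := one_mul _
  have main : |(∫ σ in b..a, f1 σ) - ∫ σ in c..a, f2 σ|
      ≤ cφ * (1 + L * |a - b|) * |b - c| := by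
    rw [key]
    calc |(∫ σ in b..a, f1 σ - f2 σ) + ∫ σ in b..c, f2 σ|
        ≤ |∫ σ in b..a, f1 σ - f2 σ| + |∫ σ in b..c, f2 σ| := abs_add_le _ _
      _ ≤ cφ * L * |b - c| * |a - b| + cφ * |b - c| := add_le_add bound1 bound2
      _ = cφ * (1 + L * |a - b|) * |b - c| := by ring
  refine ⟨main, main.trans ?_⟩
  have h1 : (1 : ℝ) ≤ max 1 L := le_max_left _ _
  have h2 : L ≤ max 1 L := le_max_right _ _
  have hab : (0:ℝ) ≤ |a - b| := abs_nonneg _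
  have hbc : (0:ℝ) ≤ |b - c| := abs_nonneg _
  have : 1 + L * |a - b| ≤ max 1 L * (1 + |a - b|) := by
    have := mul_le_mul_of_nonneg_right h2 hab
    nlinarith
  nlinarith [mul_le_mul_of_nonneg_right (mul_le_mul_of_nonneg_left this hcφ.le) hbc]
end

section
/- For all a, b ∈ ℝ, 2 I_β(a,b) + φ^β(a,b) + φ^β(b,a) ≤ M₂ |b − a| ω(ϑ)². -/
open MeasureTheory Set intervalIntegral

lemma triangle_swap {F : ℝ → ℝ → ℝ} (hF : Continuous (Function.uncurry F)) {a b : ℝ}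
    (hab : a ≤ b) :
    (∫ μ in a..b, ∫ σ in a..μ, F μ σ) = ∫ σ in a..b, ∫ μ in σ..b, F μ σ := by
  set ν := volume.restrict (Ioc a b) with hν
  haveI : IsFiniteMeasure ν := by
    constructor
    rw [hν, Measure.restrict_apply_univ]
    exact measure_Ioc_lt_top
  set T : Set (ℝ × ℝ) := {p : ℝ × ℝ | a < p.2 ∧ p.2 ≤ p.1} with hT
  have hTmeas : MeasurableSet T := by
    apply MeasurableSet.inter
    · exact measurableSet_lt measurable_const measurable_snd
    · exact measurableSet_le measurable_snd measurable_fst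
  set G : ℝ × ℝ → ℝ := T.indicator (Function.uncurry F) with hG
  obtain ⟨C, hC⟩ : ∃ C, ∀ p ∈ Icc a b ×ˢ Icc a b, ‖Function.uncurry F p‖ ≤ C :=
    (isCompact_Icc.prod isCompact_Icc).exists_bound_of_continuousOn hF.continuousOn
  have hGint : Integrable G (ν.prod ν) := by
    refine Integrable.mono' (integrable_const C) ?_ ?_
    · exact (hF.stronglyMeasurable.indicator hTmeas).aestronglyMeasurable
    · rw [hν, Measure.prod_restrict]
      filter_upwards [ae_restrict_mem (measurableSet_Ioc.prod measurableSet_Ioc)] with p hp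
      refine le_trans (norm_indicator_le_norm_self _ _) (hC p ?_)
      exact ⟨Ioc_subset_Icc_self hp.1, Ioc_subset_Icc_self hp.2⟩
  have key : (∫ μ, ∫ σ, G (μ, σ) ∂ν ∂ν) = ∫ σ, ∫ μ, G (μ, σ) ∂ν ∂ν :=
    integral_integral_swap hGint
  have hL : (∫ μ in a..b, ∫ σ in a..μ, F μ σ) = ∫ μ, ∫ σ, G (μ, σ) ∂ν ∂ν := by
    rw [intervalIntegral.integral_of_le hab]
    refine setIntegral_congr_fun measurableSet_Ioc (fun μ hμ => ?_)
    have h1 : ∀ σ, G (μ, σ) = (Ioc a μ).indicator (F μ) σ := by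
      intro σ
      simp only [hG, Set.indicator, hT, Set.mem_setOf_eq, Set.mem_Ioc, Function.uncurry]
    simp only [h1]
    rw [hν, setIntegral_indicator measurableSet_Ioc,
      Set.inter_eq_self_of_subset_right (Ioc_subset_Ioc_right hμ.2),
      intervalIntegral.integral_of_le hμ.1.le]
  have hR : (∫ σ in a..b, ∫ μ in σ..b, F μ σ) = ∫ σ, ∫ μ, G (μ, σ) ∂ν ∂ν := by
    rw [intervalIntegral.integral_of_le hab]
    refine setIntegral_congr_fun measurableSet_Ioc (fun σ hσ => ?_)
    have h1 : ∀ μ, G (μ, σ) = (Ici σ).indicator (fun μ => F μ σ) μ := by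
      intro μ
      simp only [hG, Set.indicator, hT, Set.mem_setOf_eq, Set.mem_Ici, Function.uncurry,
        hσ.1, true_and]
    have h2 : Ioc a b ∩ Ici σ = Icc σ b := by
      ext x
      simp only [Set.mem_inter_iff, Set.mem_Ioc, Set.mem_Ici, Set.mem_Icc]
      constructor
      · rintro ⟨⟨_, h⟩, h'⟩; exact ⟨h', h⟩
      · rintro ⟨h', h⟩; exact ⟨⟨lt_of_lt_of_le hσ.1 h', h⟩, h'⟩
    simp only [h1]
    rw [hν, setIntegral_indicator measurableSet_Ici, h2, integral_Icc_eq_integral_Ioc,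
      intervalIntegral.integral_of_le hσ.2]
  rw [hL, hR, key]

section betafacts
variable {β : ℝ → ℝ}

lemma beta_facts (hβC2 : ContDiff ℝ 2 β) :
    Differentiable ℝ β ∧ Differentiable ℝ (deriv β) ∧ Continuous (deriv (deriv β)) := by
  have h2 : (2 : WithTop ℕ∞) = 1 + 1 := by norm_num
  rw [h2, contDiff_succ_iff_deriv] at hβC2
  obtain ⟨h1, -, h3⟩ := hβC2
  rw [contDiff_one_iff_deriv] at h3
  exact ⟨h1, h3.1, h3.2⟩

lemma deriv_odd_of_even (hβ : Differentiable ℝ β) (hβeven : ∀ r : ℝ, β (-r) = β r) :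
    ∀ r : ℝ, deriv β (-r) = -deriv β r := by
  intro r
  have h : deriv (fun x => β (-x)) r = deriv β r := by
    congr 1
    ext x
    exact hβeven x
  rw [deriv_comp_neg] at h
  linarith

lemma deriv2_even_of_even (hβ : Differentiable ℝ (deriv β))
    (hodd : ∀ r : ℝ, deriv β (-r) = -deriv β r) :
    ∀ r : ℝ, deriv (deriv β) (-r) = deriv (deriv β) r := by
  intro r
  have h : deriv (fun x => deriv β (-x)) r = deriv (fun x => -deriv β x) r := by
    congr 1
    ext x
    exact hodd x
  rw [deriv_comp_neg, deriv.fun_neg] at h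
  linarith

end betafacts

lemma key (ϑ M₂ : ℝ) (hϑ : 0 < ϑ) (hM₂ : 0 < M₂)
    (β : ℝ → ℝ) (hβ'd : Differentiable ℝ (deriv β)) (hβ''c : Continuous (deriv (deriv β)))
    (hβ'0 : deriv β 0 = 0) (hβ'odd : ∀ r : ℝ, deriv β (-r) = -deriv β r)
    (hβ''0 : ∀ r : ℝ, 0 ≤ deriv (deriv β) r)
    (hβ''le : ∀ r : ℝ, deriv (deriv β) r ≤ M₂ / ϑ)
    (hβ''supp : ∀ r : ℝ, ϑ < |r| → deriv (deriv β) r = 0)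
    (g : ℝ → ℝ) (hg : Continuous g)
    (ω : ℝ → ℝ) (hω_nonneg : ∀ t : ℝ, 0 ≤ t → 0 ≤ ω t)
    (hω_mono : MonotoneOn ω (Set.Ici 0))
    (hω_mod : ∀ x y : ℝ, |g x - g y| ≤ ω |x - y|)
    (a b : ℝ) (hab : a ≤ b) :
    2 * (∫ μ in a..b, (∫ σ in μ..a, deriv (deriv β) (μ - σ) * g σ) * g μ)
        + (∫ σ in b..a, deriv β (σ - b) * (g σ) ^ 2)
        + (∫ σ in a..b, deriv β (σ - a) * (g σ) ^ 2)
      ≤ M₂ * (b - a) * (ω ϑ) ^ 2 := by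
  set B1 := deriv β with hB1def
  set B2 := deriv (deriv β) with hB2def
  have hB1c : Continuous B1 := hβ'd.continuous
  have hB2int : ∀ u v : ℝ, IntervalIntegrable B2 volume u v :=
    fun u v => hβ''c.intervalIntegrable u v
  have hprim : ∀ r : ℝ, (∫ x in (0:ℝ)..r, B2 x) = B1 r := by
    intro r
    rw [hB2def, integral_deriv_eq_sub (fun x _ => hβ'd x) (hB2int 0 r), hβ'0, sub_zero]
  have hB1le : ∀ r : ℝ, 0 ≤ r → B1 r ≤ M₂ := by
    have hle : ∀ r : ℝ, 0 ≤ r → r ≤ ϑ → B1 r ≤ M₂ := by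
      intro r hr hrϑ
      rw [← hprim r]
      calc (∫ x in (0:ℝ)..r, B2 x) ≤ ∫ _x in (0:ℝ)..r, M₂ / ϑ :=
            integral_mono_on hr (hB2int 0 r) intervalIntegrable_const (fun x _ => hβ''le x)
        _ = r * (M₂ / ϑ) := by rw [intervalIntegral.integral_const, smul_eq_mul, sub_zero]
        _ ≤ ϑ * (M₂ / ϑ) := mul_le_mul_of_nonneg_right hrϑ (le_of_lt (div_pos hM₂ hϑ))
        _ = M₂ := by field_simp
    intro r hr
    rcases le_or_gt r ϑ with h | h
    · exact hle r hr h
    · have hsplit : B1 r = (∫ x in (0:ℝ)..ϑ, B2 x) + ∫ x in ϑ..r, B2 x := by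
        rw [integral_add_adjacent_intervals (hB2int 0 ϑ) (hB2int ϑ r), hprim]
      have hzero : (∫ x in ϑ..r, B2 x) = 0 := by
        rw [intervalIntegral.integral_of_le h.le]
        rw [setIntegral_congr_fun measurableSet_Ioc
          (fun x hx => hβ''supp x (by rw [abs_of_pos (lt_trans hϑ hx.1)]; exact hx.1))]
        simp
      rw [hsplit, hzero, add_zero, hprim]
      exact hle ϑ hϑ.le le_rfl
  have ftc1 : ∀ μ : ℝ, (∫ σ in a..μ, B2 (μ - σ)) = B1 (μ - a) := by
    intro μ
    rw [intervalIntegral.integral_comp_sub_left (fun x => B2 x) μ, sub_self, hprim]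
  have ftc2 : ∀ σ : ℝ, (∫ μ in σ..b, B2 (μ - σ)) = B1 (b - σ) := by
    intro σ
    rw [intervalIntegral.integral_comp_sub_right (fun x => B2 x) σ, sub_self, hprim]
  -- continuity of the parametric integrals
  have hcP : Continuous (fun μ => ∫ σ in a..μ, B2 (μ - σ) * g σ) := by
    apply intervalIntegral.continuous_parametric_intervalIntegral_of_continuous
      (f := fun μ σ => B2 (μ - σ) * g σ) ?_ continuous_id
    exact (hβ''c.comp (continuous_fst.sub continuous_snd)).mul (hg.comp continuous_snd)
  have hcP2 : Continuous (fun μ => ∫ σ in a..μ, B2 (μ - σ) * (g σ) ^ 2) := by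
    apply intervalIntegral.continuous_parametric_intervalIntegral_of_continuous
      (f := fun μ σ => B2 (μ - σ) * (g σ) ^ 2) ?_ continuous_id
    exact (hβ''c.comp (continuous_fst.sub continuous_snd)).mul ((hg.comp continuous_snd).pow 2)
  have hcSq : Continuous (fun μ => ∫ σ in a..μ, B2 (μ - σ) * (g σ - g μ) ^ 2) := by
    apply intervalIntegral.continuous_parametric_intervalIntegral_of_continuous
      (f := fun μ σ => B2 (μ - σ) * (g σ - g μ) ^ 2) ?_ continuous_id
    exact (hβ''c.comp (continuous_fst.sub continuous_snd)).mul
      (((hg.comp continuous_snd).sub (hg.comp continuous_fst)).pow 2)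
  -- step 1 : rewrite I
  have e1 : (∫ μ in a..b, (∫ σ in μ..a, B2 (μ - σ) * g σ) * g μ)
      = -∫ μ in a..b, g μ * ∫ σ in a..μ, B2 (μ - σ) * g σ := by
    rw [← intervalIntegral.integral_neg]
    apply intervalIntegral.integral_congr
    intro μ _
    show (∫ σ in μ..a, B2 (μ - σ) * g σ) * g μ
        = -(g μ * ∫ σ in a..μ, B2 (μ - σ) * g σ)
    rw [intervalIntegral.integral_symm a μ]
    ring
  -- step 2 : rewrite φ¹ via Fubini
  have eswap := triangle_swap (F := fun μ σ => B2 (μ - σ) * (g σ) ^ 2)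
    (by exact (hβ''c.comp (continuous_fst.sub continuous_snd)).mul ((hg.comp continuous_snd).pow 2)) hab
  have e2 : (∫ σ in b..a, B1 (σ - b) * (g σ) ^ 2)
      = ∫ σ in a..b, ∫ μ in σ..b, B2 (μ - σ) * (g σ) ^ 2 := by
    rw [intervalIntegral.integral_symm a b, ← intervalIntegral.integral_neg]
    apply intervalIntegral.integral_congr
    intro σ _
    show -(B1 (σ - b) * (g σ) ^ 2) = ∫ μ in σ..b, B2 (μ - σ) * (g σ) ^ 2
    rw [intervalIntegral.integral_mul_const, ftc2 σ]
    have hbs : B1 (b - σ) = -B1 (σ - b) := by rw [show b - σ = -(σ - b) by ring, hβ'odd]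
    rw [hbs]; ring
  have e2' : (∫ σ in b..a, B1 (σ - b) * (g σ) ^ 2)
      = ∫ μ in a..b, ∫ σ in a..μ, B2 (μ - σ) * (g σ) ^ 2 := e2.trans eswap.symm
  -- step 3 : rewrite φ²
  have e3 : (∫ σ in a..b, B1 (σ - a) * (g σ) ^ 2)
      = ∫ μ in a..b, (g μ) ^ 2 * B1 (μ - a) :=
    intervalIntegral.integral_congr (fun σ _ => mul_comm _ _)
  -- step 4 : pointwise expansion of the square
  have e4 : ∀ μ : ℝ, (∫ σ in a..μ, B2 (μ - σ) * (g σ - g μ) ^ 2)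
      = (∫ σ in a..μ, B2 (μ - σ) * (g σ) ^ 2)
        - 2 * (g μ * ∫ σ in a..μ, B2 (μ - σ) * g σ) + (g μ) ^ 2 * B1 (μ - a) := by
    intro μ
    have i1 : IntervalIntegrable (fun σ => B2 (μ - σ) * (g σ) ^ 2) volume a μ :=
      (((hβ''c.comp (continuous_const.sub continuous_id)).mul (hg.pow 2))).intervalIntegrable a μ
    have i2 : IntervalIntegrable (fun σ => 2 * g μ * (B2 (μ - σ) * g σ)) volume a μ :=
      ((continuous_const.mul ((hβ''c.comp (continuous_const.sub continuous_id)).mul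
        hg))).intervalIntegrable a μ
    have i3 : IntervalIntegrable (fun σ => (g μ) ^ 2 * B2 (μ - σ)) volume a μ :=
      ((continuous_const.mul (hβ''c.comp (continuous_const.sub continuous_id)))).intervalIntegrable a μ
    calc (∫ σ in a..μ, B2 (μ - σ) * (g σ - g μ) ^ 2)
        = ∫ σ in a..μ, (B2 (μ - σ) * (g σ) ^ 2 - 2 * g μ * (B2 (μ - σ) * g σ)
            + (g μ) ^ 2 * B2 (μ - σ)) :=
          intervalIntegral.integral_congr (fun σ _ => by ring)
      _ = (∫ σ in a..μ, B2 (μ - σ) * (g σ) ^ 2)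
            - (∫ σ in a..μ, 2 * g μ * (B2 (μ - σ) * g σ))
            + ∫ σ in a..μ, (g μ) ^ 2 * B2 (μ - σ) := by
          rw [intervalIntegral.integral_add (i1.sub i2) i3, intervalIntegral.integral_sub i1 i2]
      _ = (∫ σ in a..μ, B2 (μ - σ) * (g σ) ^ 2)
            - 2 * (g μ * ∫ σ in a..μ, B2 (μ - σ) * g σ) + (g μ) ^ 2 * B1 (μ - a) := by
          rw [intervalIntegral.integral_const_mul, intervalIntegral.integral_const_mul,
            ftc1 μ]
          ring
  -- step 5 : integrate the expansion
  have I1 : IntervalIntegrable (fun μ => ∫ σ in a..μ, B2 (μ - σ) * (g σ) ^ 2) volume a b :=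
    hcP2.intervalIntegrable a b
  have I2 : IntervalIntegrable (fun μ => 2 * (g μ * ∫ σ in a..μ, B2 (μ - σ) * g σ)) volume a b :=
    (continuous_const.mul (hg.mul hcP)).intervalIntegrable a b
  have I3 : IntervalIntegrable (fun μ => (g μ) ^ 2 * B1 (μ - a)) volume a b :=
    ((hg.pow 2).mul (hB1c.comp (continuous_id.sub continuous_const))).intervalIntegrable a b
  have e5 : (∫ μ in a..b, ∫ σ in a..μ, B2 (μ - σ) * (g σ - g μ) ^ 2)
      = (∫ μ in a..b, ∫ σ in a..μ, B2 (μ - σ) * (g σ) ^ 2)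
        - 2 * (∫ μ in a..b, g μ * ∫ σ in a..μ, B2 (μ - σ) * g σ)
        + ∫ μ in a..b, (g μ) ^ 2 * B1 (μ - a) := by
    calc (∫ μ in a..b, ∫ σ in a..μ, B2 (μ - σ) * (g σ - g μ) ^ 2)
        = ∫ μ in a..b, ((∫ σ in a..μ, B2 (μ - σ) * (g σ) ^ 2)
            - 2 * (g μ * ∫ σ in a..μ, B2 (μ - σ) * g σ) + (g μ) ^ 2 * B1 (μ - a)) :=
          intervalIntegral.integral_congr (fun μ _ => e4 μ)
      _ = _ := by
          rw [intervalIntegral.integral_add (I1.sub I2) I3, intervalIntegral.integral_sub I1 I2,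
            intervalIntegral.integral_const_mul]
  -- step 6 : the pointwise bound
  have hpt : ∀ μ ∈ Icc a b, (∫ σ in a..μ, B2 (μ - σ) * (g σ - g μ) ^ 2) ≤ M₂ * (ω ϑ) ^ 2 := by
    intro μ hμ
    have iA : IntervalIntegrable (fun σ => B2 (μ - σ) * (g σ - g μ) ^ 2) volume a μ :=
      ((hβ''c.comp (continuous_const.sub continuous_id)).mul
        ((hg.sub continuous_const).pow 2)).intervalIntegrable a μ
    have iB : IntervalIntegrable (fun σ => B2 (μ - σ) * (ω ϑ) ^ 2) volume a μ :=
      ((hβ''c.comp (continuous_const.sub continuous_id)).mul continuous_const).intervalIntegrable a μ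
    have hptσ : ∀ σ ∈ Icc a μ, B2 (μ - σ) * (g σ - g μ) ^ 2 ≤ B2 (μ - σ) * (ω ϑ) ^ 2 := by
      intro σ hσ
      rcases le_or_gt (μ - σ) ϑ with h | h
      · have h1 : |g σ - g μ| ≤ ω (μ - σ) := by
          have h0 := hω_mod σ μ
          have h2 : |σ - μ| = μ - σ := by
            rw [abs_sub_comm]; exact abs_of_nonneg (by linarith [hσ.2])
          rwa [h2] at h0
        have h2 : ω (μ - σ) ≤ ω ϑ :=
          hω_mono (mem_Ici.mpr (by linarith [hσ.2])) (mem_Ici.mpr hϑ.le) h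
        have h3 : (g σ - g μ) ^ 2 ≤ (ω ϑ) ^ 2 := by
          rw [← sq_abs]
          exact pow_le_pow_left₀ (abs_nonneg _) (h1.trans h2) 2
        exact mul_le_mul_of_nonneg_left h3 (hβ''0 _)
      · have hz : B2 (μ - σ) = 0 :=
          hβ''supp _ (by rw [abs_of_nonneg (by linarith [hσ.2])]; exact h)
        simp [hz]
    calc (∫ σ in a..μ, B2 (μ - σ) * (g σ - g μ) ^ 2)
        ≤ ∫ σ in a..μ, B2 (μ - σ) * (ω ϑ) ^ 2 := integral_mono_on hμ.1 iA iB hptσ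
      _ = B1 (μ - a) * (ω ϑ) ^ 2 := by rw [intervalIntegral.integral_mul_const, ftc1 μ]
      _ ≤ M₂ * (ω ϑ) ^ 2 :=
          mul_le_mul_of_nonneg_right (hB1le _ (by linarith [hμ.1])) (sq_nonneg _)
  -- assemble
  have hfinal : (∫ μ in a..b, ∫ σ in a..μ, B2 (μ - σ) * (g σ - g μ) ^ 2)
      ≤ (b - a) * (M₂ * (ω ϑ) ^ 2) := by
    calc (∫ μ in a..b, ∫ σ in a..μ, B2 (μ - σ) * (g σ - g μ) ^ 2)
        ≤ ∫ _μ in a..b, M₂ * (ω ϑ) ^ 2 :=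
          integral_mono_on hab (hcSq.intervalIntegrable a b) intervalIntegrable_const hpt
      _ = (b - a) * (M₂ * (ω ϑ) ^ 2) := by
          rw [intervalIntegral.integral_const, smul_eq_mul]
  rw [e1, e2', e3]
  have hring : M₂ * (b - a) * (ω ϑ) ^ 2 = (b - a) * (M₂ * (ω ϑ) ^ 2) := by ring
  linarith [e5, hfinal]

/-- Let `ϑ > 0`, `M₂ > 0`, `β` `C²` and even with `0 ≤ β'' ≤ M₂/ϑ` and
`β'' = 0` outside `[-ϑ, ϑ]`; let `g` be continuous with modulus of continuity `ω`.
With `I_β(a,b) = ∫_a^b (∫_μ^a β''(μ-σ) g σ dσ) g μ dμ` and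
`φ^β(a,b) = ∫_b^a β'(σ-b) (g σ)² dσ`, one has
`2 I_β(a,b) + φ^β(a,b) + φ^β(b,a) ≤ M₂ |b - a| ω(ϑ)²`. -/
theorem stmt6 (ϑ M₂ : ℝ) (hϑ : 0 < ϑ) (hM₂ : 0 < M₂)
    (β : ℝ → ℝ) (hβC2 : ContDiff ℝ 2 β) (hβeven : ∀ r : ℝ, β (-r) = β r)
    (hβ''0 : ∀ r : ℝ, 0 ≤ deriv (deriv β) r)
    (hβ''le : ∀ r : ℝ, deriv (deriv β) r ≤ M₂ / ϑ)
    (hβ''supp : ∀ r : ℝ, ϑ < |r| → deriv (deriv β) r = 0)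
    (g : ℝ → ℝ) (hg : Continuous g)
    (ω : ℝ → ℝ) (hω_nonneg : ∀ t : ℝ, 0 ≤ t → 0 ≤ ω t)
    (hω_mono : MonotoneOn ω (Set.Ici 0))
    (hω_mod : ∀ x y : ℝ, |g x - g y| ≤ ω |x - y|) :
    ∀ a b : ℝ,
      2 * (∫ μ in a..b, (∫ σ in μ..a, deriv (deriv β) (μ - σ) * g σ) * g μ)
          + (∫ σ in b..a, deriv β (σ - b) * (g σ) ^ 2)
          + (∫ σ in a..b, deriv β (σ - a) * (g σ) ^ 2)
        ≤ M₂ * |b - a| * (ω ϑ) ^ 2 := by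
  obtain ⟨hβd, hβ'd, hβ''c⟩ := beta_facts hβC2
  have hβ'odd : ∀ r : ℝ, deriv β (-r) = -deriv β r := deriv_odd_of_even hβd hβeven
  have hβ''even : ∀ r : ℝ, deriv (deriv β) (-r) = deriv (deriv β) r :=
    deriv2_even_of_even hβ'd hβ'odd
  have hβ'0 : deriv β 0 = 0 := by have h := hβ'odd 0; rw [neg_zero] at h; linarith
  set B1 := deriv β with hB1def
  set B2 := deriv (deriv β) with hB2def
  intro a b
  rcases le_total a b with hab | hab
  · have h := key ϑ M₂ hϑ hM₂ β hβ'd hβ''c hβ'0 hβ'odd hβ''0 hβ''le hβ''supp g hg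
      ω hω_nonneg hω_mono hω_mod a b hab
    rwa [show |b - a| = b - a from abs_of_nonneg (by linarith)]
  · -- reflection: apply `key` to `g ∘ neg` on `[-a, -b]`
    have hg' : Continuous (fun x => g (-x)) := hg.comp continuous_neg
    have hω_mod' : ∀ x y : ℝ, |g (-x) - g (-y)| ≤ ω |x - y| := by
      intro x y
      have h := hω_mod (-x) (-y)
      rwa [show -x - -y = -(x - y) by ring, abs_neg] at h
    have h := key ϑ M₂ hϑ hM₂ β hβ'd hβ''c hβ'0 hβ'odd hβ''0 hβ''le hβ''supp
      (fun x => g (-x)) hg' ω hω_nonneg hω_mono hω_mod' (-a) (-b) (neg_le_neg hab)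
    have E1 : (∫ μ in -a..-b, (∫ σ in μ..-a, B2 (μ - σ) * g (-σ)) * g (-μ))
        = ∫ μ in a..b, (∫ σ in μ..a, B2 (μ - σ) * g σ) * g μ := by
      rw [← intervalIntegral.integral_comp_neg
        (fun μ => (∫ σ in μ..-a, B2 (μ - σ) * g (-σ)) * g (-μ)),
        intervalIntegral.integral_symm a b, ← intervalIntegral.integral_neg]
      apply intervalIntegral.integral_congr
      intro μ _
      show -((∫ σ in -μ..-a, B2 (-μ - σ) * g (-σ)) * g (- -μ))
          = (∫ σ in μ..a, B2 (μ - σ) * g σ) * g μ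
      rw [neg_neg]
      have hin : (∫ σ in -μ..-a, B2 (-μ - σ) * g (-σ)) = ∫ σ in a..μ, B2 (μ - σ) * g σ := by
        rw [← intervalIntegral.integral_comp_neg (fun σ => B2 (-μ - σ) * g (-σ))]
        apply intervalIntegral.integral_congr
        intro σ _
        show B2 (-μ - -σ) * g (- -σ) = B2 (μ - σ) * g σ
        rw [neg_neg, show -μ - -σ = -(μ - σ) by ring, hβ''even]
      rw [hin, intervalIntegral.integral_symm a μ]
      ring
    have E2 : (∫ σ in -b..-a, B1 (σ - -b) * (g (-σ)) ^ 2)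
        = ∫ σ in b..a, B1 (σ - b) * (g σ) ^ 2 := by
      rw [← intervalIntegral.integral_comp_neg (fun σ => B1 (σ - -b) * (g (-σ)) ^ 2),
        intervalIntegral.integral_symm a b, ← intervalIntegral.integral_neg]
      apply intervalIntegral.integral_congr
      intro σ _
      show B1 (-σ - -b) * (g (- -σ)) ^ 2 = -(B1 (σ - b) * g σ ^ 2)
      rw [neg_neg, show -σ - -b = -(σ - b) by ring, hβ'odd]
      ring
    have E3 : (∫ σ in -a..-b, B1 (σ - -a) * (g (-σ)) ^ 2)
        = ∫ σ in a..b, B1 (σ - a) * (g σ) ^ 2 := by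
      rw [← intervalIntegral.integral_comp_neg (fun σ => B1 (σ - -a) * (g (-σ)) ^ 2),
        intervalIntegral.integral_symm b a, ← intervalIntegral.integral_neg]
      apply intervalIntegral.integral_congr
      intro σ _
      show B1 (-σ - -a) * (g (- -σ)) ^ 2 = -(B1 (σ - a) * g σ ^ 2)
      rw [neg_neg, show -σ - -a = -(σ - a) by ring, hβ'odd]
      ring
    rw [E1, E2, E3] at h
    rwa [show M₂ * (-b - -a) * ω ϑ ^ 2 = M₂ * |b - a| * ω ϑ ^ 2 by
      rw [show |b - a| = -(b - a) from abs_of_nonpos (by linarith)]; ring] at h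
end

section
/- There exists a constant C depending only on M₂ and c_φ (one may take C = max(M₂, c_φ)) such that for all a, b ∈ ℝ, 2 I_β(a,b) + φ^β(b,a) ≤ C |b − a| ω(ϑ)² + C min{ 2ϑ, |b − a| }. -/
/-- Under the assumptions of Statement 6, with in addition `g` nonnegative
and `g² ≤ c_φ`, taking `C = max M₂ c_φ` one has
`2 I_β(a,b) + φ^β(b,a) ≤ C |b - a| ω(ϑ)² + C min (2ϑ) |b - a|`. -/
theorem stmt7 (ϑ M₂ cφ : ℝ) (hϑ : 0 < ϑ) (hM₂ : 0 < M₂) (hcφ : 0 < cφ)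
    (β : ℝ → ℝ) (hβC2 : ContDiff ℝ 2 β) (hβeven : ∀ r : ℝ, β (-r) = β r)
    (hβ''0 : ∀ r : ℝ, 0 ≤ deriv (deriv β) r)
    (hβ''le : ∀ r : ℝ, deriv (deriv β) r ≤ M₂ / ϑ)
    (hβ''supp : ∀ r : ℝ, ϑ < |r| → deriv (deriv β) r = 0)
    (g : ℝ → ℝ) (hg : Continuous g) (hg0 : ∀ σ : ℝ, 0 ≤ g σ)
    (hgsq : ∀ σ : ℝ, (g σ) ^ 2 ≤ cφ)
    (ω : ℝ → ℝ) (hω_nonneg : ∀ t : ℝ, 0 ≤ t → 0 ≤ ω t)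
    (hω_mono : MonotoneOn ω (Set.Ici 0))
    (hω_mod : ∀ x y : ℝ, |g x - g y| ≤ ω |x - y|) :
    ∀ a b : ℝ,
      2 * (∫ μ in a..b, (∫ σ in μ..a, deriv (deriv β) (μ - σ) * g σ) * g μ)
          + (∫ σ in a..b, deriv β (σ - a) * (g σ) ^ 2)
        ≤ max M₂ cφ * |b - a| * (ω ϑ) ^ 2 + max M₂ cφ * min (2 * ϑ) |b - a| := by
  intro a b
  set B1 := deriv β with hB1def
  set B2 := deriv B1 with hB2def
  -- regularity
  have hd := contDiff_one_iff_deriv.mp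
    (contDiff_succ_iff_deriv.mp (show ContDiff ℝ (1 + 1) β by norm_num; exact hβC2)).2.2
  have hB1diff : Differentiable ℝ B1 := hd.1
  have hB2cont : Continuous B2 := hd.2
  have hB1cont : Continuous B1 := hB1diff.continuous
  -- oddness of B1, evenness of B2
  have hB1odd : ∀ r : ℝ, B1 (-r) = -B1 r := by
    intro r
    have h1 : (fun x : ℝ => β (-x)) = β := funext hβeven
    have h2 := deriv_comp_neg (f := β) (x := r)
    rw [h1] at h2
    rw [hB1def]; linarith [h2]
  have hB10 : B1 0 = 0 := by
    have := hB1odd 0; simp at this; linarith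
  have hB2even : ∀ r : ℝ, B2 (-r) = B2 r := by
    intro r
    have h1 : (fun x : ℝ => B1 (-x)) = fun x => -B1 x := funext hB1odd
    have h2 := deriv_comp_neg (f := B1) (x := r)
    rw [h1, deriv.fun_neg] at h2
    rw [hB2def]; linarith [h2]
  -- support of B2 on closed set
  have hB2ϑ : B2 ϑ = 0 := by
    have h1 : Filter.Tendsto B2 (nhdsWithin ϑ (Set.Ioi ϑ)) (nhds (B2 ϑ)) :=
      (hB2cont.tendsto ϑ).mono_left nhdsWithin_le_nhds
    have h2 : ∀ᶠ x in nhdsWithin ϑ (Set.Ioi ϑ), B2 x = 0 := by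
      filter_upwards [self_mem_nhdsWithin] with x hx
      exact hβ''supp x (by rw [abs_of_pos (lt_trans hϑ hx)]; exact hx)
    have h3 : Filter.Tendsto (fun _ : ℝ => (0:ℝ)) (nhdsWithin ϑ (Set.Ioi ϑ)) (nhds (B2 ϑ)) :=
      h1.congr' h2
    exact (tendsto_nhds_unique h3 tendsto_const_nhds)
  have hB2supp : ∀ r : ℝ, ϑ ≤ |r| → B2 r = 0 := by
    intro r hr
    rcases eq_or_lt_of_le hr with h | h
    · rcases (abs_eq hϑ.le).mp h.symm with h' | h'
      · rw [h']; exact hB2ϑ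
      · rw [h', hB2even]; exact hB2ϑ
    · exact hβ''supp r h
  -- FTC
  have hFTC : ∀ c : ℝ, (∫ s in (0:ℝ)..c, B2 s) = B1 c := by
    intro c
    have h := intervalIntegral.integral_deriv_eq_sub (f := B1) (a := (0:ℝ)) (b := c)
      (fun x _ => hB1diff x) (hB2cont.intervalIntegrable 0 c)
    rw [← hB2def] at h
    rw [h, hB10, sub_zero]
  have hB1nonneg : ∀ r : ℝ, 0 ≤ r → 0 ≤ B1 r := by
    intro r hr
    rw [← hFTC r]
    exact intervalIntegral.integral_nonneg hr (fun x _ => hβ''0 x)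
  have hB1leM : ∀ r : ℝ, 0 ≤ r → B1 r ≤ M₂ := by
    have key : ∀ r : ℝ, 0 ≤ r → r ≤ ϑ → (∫ s in (0:ℝ)..r, B2 s) ≤ M₂ := by
      intro r hr hrϑ
      calc (∫ s in (0:ℝ)..r, B2 s) ≤ ∫ _ in (0:ℝ)..r, (M₂ / ϑ) :=
            intervalIntegral.integral_mono_on hr (hB2cont.intervalIntegrable 0 r)
              intervalIntegrable_const (fun x _ => hβ''le x)
        _ = r * (M₂ / ϑ) := by simp [mul_div_assoc]
        _ ≤ ϑ * (M₂ / ϑ) := by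
            have : 0 ≤ M₂ / ϑ := by positivity
            exact mul_le_mul_of_nonneg_right hrϑ this
        _ = M₂ := by field_simp
    intro r hr
    rw [← hFTC r]
    rcases le_or_gt r ϑ with h | h
    · exact key r hr h
    · have hsplit : (∫ s in (0:ℝ)..ϑ, B2 s) + (∫ s in ϑ..r, B2 s) = ∫ s in (0:ℝ)..r, B2 s :=
        intervalIntegral.integral_add_adjacent_intervals (hB2cont.intervalIntegrable 0 ϑ)
          (hB2cont.intervalIntegrable ϑ r)
      have hzero : (∫ s in ϑ..r, B2 s) = 0 := by
        have heq : Set.EqOn B2 (fun _ => (0:ℝ)) (Set.uIcc ϑ r) := by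
          intro x hx
          rw [Set.uIcc_of_le h.le] at hx
          exact hB2supp x (by rw [abs_of_pos (lt_of_lt_of_le hϑ hx.1)]; exact hx.1)
        rw [intervalIntegral.integral_congr heq]; simp
      rw [← hsplit, hzero, add_zero]
      exact key ϑ hϑ.le le_rfl
  -- pointwise bound on the inner integrand
  have hw : 0 ≤ ω ϑ := hω_nonneg ϑ hϑ.le
  have hpt : ∀ μ σ : ℝ, B2 (μ - σ) * (g μ - ω ϑ) ≤ B2 (μ - σ) * g σ := by
    intro μ σ
    rcases le_or_gt |μ - σ| ϑ with h | h
    · have h1 : |g μ - g σ| ≤ ω ϑ :=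
        le_trans (hω_mod μ σ) (hω_mono (Set.mem_Ici.mpr (abs_nonneg _)) (Set.mem_Ici.mpr hϑ.le) h)
      have h2 : g μ - ω ϑ ≤ g σ := by
        have := (abs_le.mp h1).2; linarith
      exact mul_le_mul_of_nonneg_left h2 (hβ''0 _)
    · rw [hβ''supp _ h]; simp
  -- the inner integral
  set Q : ℝ → ℝ := fun μ => ∫ σ in μ..a, B2 (μ - σ) * g σ with hQdef
  have hQcont : Continuous Q := by
    have hunc : Continuous (Function.uncurry fun (μ σ : ℝ) => B2 (μ - σ) * g σ) :=
      (hB2cont.comp (continuous_fst.sub continuous_snd)).mul (hg.comp continuous_snd)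
    have h := intervalIntegral.continuous_parametric_intervalIntegral_of_continuous
      (μ := MeasureTheory.volume) (a₀ := a) hunc continuous_id
    have heq : Q = fun μ => -(∫ σ in a..μ, B2 (μ - σ) * g σ) :=
      funext fun μ => intervalIntegral.integral_symm a μ
    rw [heq]; exact h.neg
  -- computation of ∫ B2 (μ - σ) dσ
  have hcomp1 : ∀ μ : ℝ, (∫ σ in a..μ, B2 (μ - σ)) = B1 (μ - a) := by
    intro μ
    rw [intervalIntegral.integral_comp_sub_left B2 μ]
    rw [show μ - μ = (0:ℝ) by ring, hFTC]
  have hcomp2 : ∀ μ : ℝ, (∫ σ in μ..a, B2 (μ - σ)) = B1 (a - μ) := by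
    intro μ
    rw [intervalIntegral.integral_comp_sub_left B2 μ]
    rw [show μ - μ = (0:ℝ) by ring, show μ - a = -(a - μ) by ring]
    have h1 : (∫ x in (0:ℝ)..(a - μ), B2 (-x)) = ∫ x in -(a - μ)..(-(0:ℝ)), B2 x :=
      intervalIntegral.integral_comp_neg B2
    simp only [neg_zero] at h1
    rw [← h1]
    simp_rw [hB2even]
    exact hFTC (a - μ)
  have hgB2cont : ∀ μ : ℝ, Continuous (fun σ => B2 (μ - σ) * g σ) := fun μ =>
    (hB2cont.comp (continuous_const.sub continuous_id)).mul hg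
  have hcB2cont : ∀ μ : ℝ, Continuous (fun σ => B2 (μ - σ) * (g μ - ω ϑ)) := fun μ =>
    (hB2cont.comp (continuous_const.sub continuous_id)).mul continuous_const
  -- upper bound for μ ≥ a
  have hPle : ∀ μ : ℝ, a ≤ μ →
      2 * (Q μ * g μ) + B1 (μ - a) * g μ ^ 2 ≤ M₂ * ω ϑ ^ 2 := by
    intro μ hμ
    have hQle : Q μ ≤ -(B1 (μ - a) * (g μ - ω ϑ)) := by
      have h1 : (∫ σ in a..μ, B2 (μ - σ) * (g μ - ω ϑ)) ≤ ∫ σ in a..μ, B2 (μ - σ) * g σ :=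
        intervalIntegral.integral_mono_on hμ ((hcB2cont μ).intervalIntegrable a μ)
          ((hgB2cont μ).intervalIntegrable a μ) (fun σ _ => hpt μ σ)
      have h2 : (∫ σ in a..μ, B2 (μ - σ) * (g μ - ω ϑ)) = B1 (μ - a) * (g μ - ω ϑ) := by
        rw [intervalIntegral.integral_mul_const, hcomp1 μ]
      have h3 : Q μ = -(∫ σ in a..μ, B2 (μ - σ) * g σ) := intervalIntegral.integral_symm a μ
      rw [h3]; rw [h2] at h1; linarith
    have hB1nn := hB1nonneg (μ - a) (by linarith)
    have hB1le := hB1leM (μ - a) (by linarith)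
    nlinarith [mul_le_mul_of_nonneg_right hQle (hg0 μ),
      mul_nonneg hB1nn (sq_nonneg (g μ - ω ϑ)),
      mul_le_mul_of_nonneg_right hB1le (sq_nonneg (ω ϑ))]
  -- lower bound for μ ≤ a
  have hPge : ∀ μ : ℝ, μ ≤ a →
      -(M₂ * ω ϑ ^ 2) ≤ 2 * (Q μ * g μ) + B1 (μ - a) * g μ ^ 2 := by
    intro μ hμ
    have hQge : B1 (a - μ) * (g μ - ω ϑ) ≤ Q μ := by
      have h1 : (∫ σ in μ..a, B2 (μ - σ) * (g μ - ω ϑ)) ≤ ∫ σ in μ..a, B2 (μ - σ) * g σ :=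
        intervalIntegral.integral_mono_on hμ ((hcB2cont μ).intervalIntegrable μ a)
          ((hgB2cont μ).intervalIntegrable μ a) (fun σ _ => hpt μ σ)
      have h2 : (∫ σ in μ..a, B2 (μ - σ) * (g μ - ω ϑ)) = B1 (a - μ) * (g μ - ω ϑ) := by
        rw [intervalIntegral.integral_mul_const, hcomp2 μ]
      rw [h2] at h1; exact h1
    have hB1nn := hB1nonneg (a - μ) (by linarith)
    have hB1le := hB1leM (a - μ) (by linarith)
    have hodd : B1 (μ - a) = -B1 (a - μ) := by
      rw [show μ - a = -(a - μ) by ring, hB1odd]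
    rw [hodd]
    nlinarith [mul_le_mul_of_nonneg_right hQge (hg0 μ),
      mul_nonneg hB1nn (sq_nonneg (g μ - ω ϑ)),
      mul_le_mul_of_nonneg_right hB1le (sq_nonneg (ω ϑ))]
  -- rewrite the LHS as a single integral
  have hint1 : IntervalIntegrable (fun μ => 2 * (Q μ * g μ)) MeasureTheory.volume a b :=
    (continuous_const.mul (hQcont.mul hg)).intervalIntegrable a b
  have hint2 : IntervalIntegrable (fun μ => B1 (μ - a) * g μ ^ 2) MeasureTheory.volume a b :=
    ((hB1cont.comp (continuous_id.sub continuous_const)).mul (hg.pow 2)).intervalIntegrable a b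
  have hPint : IntervalIntegrable (fun μ => 2 * (Q μ * g μ) + B1 (μ - a) * g μ ^ 2)
      MeasureTheory.volume a b := hint1.add hint2
  have hsum : 2 * (∫ μ in a..b, (∫ σ in μ..a, B2 (μ - σ) * g σ) * g μ)
      + (∫ σ in a..b, B1 (σ - a) * g σ ^ 2)
      = ∫ μ in a..b, (2 * (Q μ * g μ) + B1 (μ - a) * g μ ^ 2) := by
    rw [intervalIntegral.integral_add hint1 hint2, intervalIntegral.integral_const_mul]
  rw [hsum]
  have hmaxM : M₂ ≤ max M₂ cφ := le_max_left M₂ cφ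
  have hmaxpos : (0:ℝ) < max M₂ cφ := lt_of_lt_of_le hM₂ hmaxM
  have hminnn : 0 ≤ min (2 * ϑ) |b - a| := le_min (by positivity) (abs_nonneg _)
  rcases le_total a b with hab | hab
  · have h1 : (∫ μ in a..b, (2 * (Q μ * g μ) + B1 (μ - a) * g μ ^ 2))
        ≤ (b - a) * (M₂ * ω ϑ ^ 2) := by
      calc (∫ μ in a..b, (2 * (Q μ * g μ) + B1 (μ - a) * g μ ^ 2))
          ≤ ∫ _ in a..b, (M₂ * ω ϑ ^ 2) :=
            intervalIntegral.integral_mono_on hab hPint intervalIntegrable_const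
              (fun μ hμ => hPle μ hμ.1)
        _ = (b - a) * (M₂ * ω ϑ ^ 2) := by simp; ring
    have habs : |b - a| = b - a := abs_of_nonneg (by linarith)
    rw [habs]
    have h2 : (b - a) * (M₂ * ω ϑ ^ 2) ≤ max M₂ cφ * (b - a) * ω ϑ ^ 2 := by
      nlinarith [mul_le_mul_of_nonneg_right hmaxM
        (mul_nonneg (sq_nonneg (ω ϑ)) (sub_nonneg.mpr hab)), sq_nonneg (ω ϑ)]
    have h3 : 0 ≤ max M₂ cφ * min (2 * ϑ) (b - a) := by
      apply mul_nonneg hmaxpos.le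
      rw [← habs]; exact hminnn
    rw [habs] at hminnn
    linarith
  · have h1 : (a - b) * (-(M₂ * ω ϑ ^ 2)) ≤ ∫ μ in b..a, (2 * (Q μ * g μ) + B1 (μ - a) * g μ ^ 2) := by
      calc (a - b) * (-(M₂ * ω ϑ ^ 2))
          = ∫ _ in b..a, (-(M₂ * ω ϑ ^ 2)) := by simp; ring
        _ ≤ ∫ μ in b..a, (2 * (Q μ * g μ) + B1 (μ - a) * g μ ^ 2) :=
            intervalIntegral.integral_mono_on hab intervalIntegrable_const (hPint.symm)
              (fun μ hμ => hPge μ hμ.2)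
    have h2 : (∫ μ in a..b, (2 * (Q μ * g μ) + B1 (μ - a) * g μ ^ 2))
        = -(∫ μ in b..a, (2 * (Q μ * g μ) + B1 (μ - a) * g μ ^ 2)) :=
      intervalIntegral.integral_symm b a
    have habs : |b - a| = a - b := by
      rw [abs_sub_comm]; exact abs_of_nonneg (by linarith)
    rw [h2, habs]
    have h3 : (a - b) * (M₂ * ω ϑ ^ 2) ≤ max M₂ cφ * (a - b) * ω ϑ ^ 2 := by
      nlinarith [mul_le_mul_of_nonneg_right hmaxM
        (mul_nonneg (sq_nonneg (ω ϑ)) (sub_nonneg.mpr hab)), sq_nonneg (ω ϑ)]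
    have h4 : 0 ≤ max M₂ cφ * min (2 * ϑ) (a - b) := by
      apply mul_nonneg hmaxpos.le
      rw [← habs]; exact hminnn
    linarith
end
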